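/- arXiv:math/0510293 — 5 statements merged into one kernel-verified Lean document; each statement's English description precedes it below -/
import Mathlib

section
/- For a prime ℓ and a primitive ℓ-th root of unity ζ_ℓ, the trace from ℚ(ζ_ℓ) to ℚ of 1/(ζ_ℓ - 1)² equals (ℓ-1)²/4 - (ℓ-1)(ℓ-2)/3. -/
open Finset Polynomial

private lemma aux_sumId (n : ℕ) : ∑ j ∈ range n, (j:ℚ) = n*(n-1)/2 := by
  induction n with
  | zero => simp
  | succ m ih => rw [Finset.sum_range_succ, ih]; push_cast; ring

private lemma aux_sumSq (n : ℕ) : ∑ j ∈ range n, (j:ℚ)^2 = n*(n-1)*(2*n-1)/6 := by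
  induction n with
  | zero => simp
  | succ m ih => rw [Finset.sum_range_succ, ih]; push_cast; ring

private lemma aux_innerSum (ℓ : ℕ) (hℓ : 0 < ℓ) (j : ℕ) (hj : j < ℓ) :
    ∑ k ∈ range ℓ, (if ℓ ∣ (j + k) then (j:ℚ) * (k:ℚ) else 0)
      = (j:ℚ) * ((ℓ:ℚ) - (j:ℚ)) := by
  rw [Finset.sum_eq_single ((ℓ - j) % ℓ)]
  · rcases Nat.eq_zero_or_pos j with h0 | h0
    · subst h0; simp
    · have hmod : (ℓ - j) % ℓ = ℓ - j := Nat.mod_eq_of_lt (by omega)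
      rw [hmod, if_pos (by exact ⟨1, by omega⟩)]
      rw [Nat.cast_sub (by omega)]
  · intro k hk hne
    rw [Finset.mem_range] at hk
    rw [if_neg]
    rintro ⟨c, hc⟩
    have hcases : j + k = 0 ∨ j + k = ℓ := by
      rcases Nat.lt_or_ge c 2 with h2 | h2
      · interval_cases c <;> omega
      · exfalso
        have : ℓ * 2 ≤ ℓ * c := Nat.mul_le_mul_left ℓ h2
        omega
    apply hne
    rcases hcases with h | h
    · have hj0 : j = 0 := by omega
      rw [hj0, Nat.sub_zero, Nat.mod_self]
      omega
    · have hj1 : 1 ≤ j := by omega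
      rw [Nat.mod_eq_of_lt (by omega : ℓ - j < ℓ)]
      omega
  · intro h
    exact absurd (Finset.mem_range.mpr (Nat.mod_lt _ hℓ)) h

private lemma aux_trace_primroot (ℓ : ℕ) (hℓ : ℓ.Prime) (K : Type*) [Field K] [Algebra ℚ K]
    [IsCyclotomicExtension {ℓ} ℚ K] {η : K} (hη : IsPrimitiveRoot η ℓ) :
    Algebra.trace ℚ K η = -1 := by
  haveI := Fact.mk hℓ
  haveI : CharZero K := charZero_of_injective_algebraMap (algebraMap ℚ K).injective
  have hη' : IsPrimitiveRoot η ℓ := hη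
  rw [← hη'.powerBasis_gen ℚ, PowerBasis.trace_gen_eq_nextCoeff_minpoly,
    hη'.powerBasis_gen ℚ]
  have hmin : minpoly ℚ η = cyclotomic ℓ ℚ := by
    have := cyclotomic_eq_minpoly_rat hη hℓ.pos
    rw [this]
    congr 1
    exact Subsingleton.elim _ _
  rw [hmin, cyclotomic_prime ℚ ℓ]
  have h2 : 2 ≤ ℓ := hℓ.two_le
  have hnd : (∑ i ∈ range ℓ, (X : ℚ[X]) ^ i).natDegree = ℓ - 1 := by
    rw [← cyclotomic_prime ℚ ℓ, natDegree_cyclotomic, Nat.totient_prime hℓ]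
  rw [nextCoeff_of_natDegree_pos (by omega), hnd]
  simp only [finset_sum_coeff, coeff_X_pow]
  rw [Finset.sum_ite_eq (range ℓ) (ℓ - 1 - 1) (fun _ => (1:ℚ))]
  simp [Finset.mem_range]; omega

/-- For a prime `ℓ` and a primitive `ℓ`-th root of unity `ζ`, the trace from
`ℚ(ζ)` to `ℚ` of `1/(ζ - 1)²` equals `(ℓ-1)²/4 - (ℓ-1)(ℓ-2)/3`. -/
theorem trace_one_div_zeta_sub_one_sq (ℓ : ℕ) (hℓ : ℓ.Prime)
    (K : Type*) [Field K] [Algebra ℚ K]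
    [IsCyclotomicExtension {ℓ} ℚ K]
    (ζ : K) (hζ : IsPrimitiveRoot ζ ℓ) :
    Algebra.trace ℚ K (1 / (ζ - 1) ^ 2) =
      ((ℓ : ℚ) - 1) ^ 2 / 4 - ((ℓ : ℚ) - 1) * ((ℓ : ℚ) - 2) / 3 := by
  haveI := Fact.mk hℓ
  haveI : CharZero K := charZero_of_injective_algebraMap (algebraMap ℚ K).injective
  have h2 : 2 ≤ ℓ := hℓ.two_le
  set S : K := ∑ j ∈ range ℓ, (j : K) * ζ ^ j with hSdef
  -- the telescoping identity
  have hS : (ζ - 1) * S = (ℓ : K) := by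
    have tel : ∑ j ∈ range ℓ, (((j+1 : ℕ) : K) * ζ ^ (j+1) - (j : K) * ζ ^ j)
        = (ℓ : K) * ζ ^ ℓ - 0 := by
      have := Finset.sum_range_sub (f := fun j => (j : K) * ζ ^ j) ℓ
      simpa using this
    have hgeo : ∑ j ∈ range ℓ, ζ ^ j = 0 := hζ.geom_sum_eq_zero (by omega)
    have expand : (ζ - 1) * S
        = (∑ j ∈ range ℓ, (((j+1:ℕ) : K) * ζ ^ (j+1) - (j : K) * ζ ^ j))
          - ζ * ∑ j ∈ range ℓ, ζ ^ j := by
      rw [hSdef, Finset.mul_sum, Finset.mul_sum, ← Finset.sum_sub_distrib]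
      apply Finset.sum_congr rfl
      intro j _
      push_cast
      ring
    rw [expand, tel, hζ.pow_eq_one, hgeo]
    ring
  have hζ1 : ζ - 1 ≠ 0 := sub_ne_zero.mpr (hζ.ne_one (by omega))
  have hℓ0 : (ℓ : ℚ) ≠ 0 := Nat.cast_ne_zero.mpr (by omega)
  have hℓK : (ℓ : K) ≠ 0 := Nat.cast_ne_zero.mpr (by omega)
  -- trace of powers of ζ
  have Tpow : ∀ m : ℕ, Algebra.trace ℚ K (ζ ^ m)
      = if ℓ ∣ m then (ℓ:ℚ) - 1 else -1 := by
    intro m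
    by_cases hd : ℓ ∣ m
    · rw [if_pos hd]
      obtain ⟨c, rfl⟩ := hd
      rw [pow_mul, hζ.pow_eq_one, one_pow]
      have hfr : Module.finrank ℚ K = ℓ - 1 := by
        rw [IsCyclotomicExtension.finrank (n := ℓ) K
          (cyclotomic.irreducible_rat (n := ℓ) hℓ.pos)]
        exact Nat.totient_prime hℓ
      have h1 := Algebra.trace_algebraMap (S := K) (1 : ℚ)
      rw [map_one] at h1
      rw [h1, hfr, nsmul_eq_mul, mul_one, Nat.cast_sub (by omega : 1 ≤ ℓ), Nat.cast_one]
    · rw [if_neg hd]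
      have hc : m.Coprime ℓ :=
        Nat.coprime_comm.mp ((Nat.Prime.coprime_iff_not_dvd hℓ).mpr hd)
      exact aux_trace_primroot ℓ hℓ K (hζ.pow_of_coprime m hc)
  -- rewrite 1/(ζ-1)^2 as a scalar multiple of S*S
  have key : (1 : K) / (ζ - 1)^2 = ((ℓ:ℚ)^2)⁻¹ • (S * S) := by
    have h1 : (ζ-1)^2 * (S*S) = (ℓ:K)^2 := by
      calc (ζ-1)^2 * (S*S) = ((ζ-1)*S) * ((ζ-1)*S) := by ring
        _ = (ℓ:K) * (ℓ:K) := by rw [hS]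
        _ = (ℓ:K)^2 := by ring
    have h3 : (1 : K) / (ζ - 1)^2 = (S*S) / (ℓ:K)^2 := by
      rw [div_eq_div_iff (pow_ne_zero 2 hζ1) (pow_ne_zero 2 hℓK), one_mul]
      linear_combination -h1
    rw [h3, Algebra.smul_def, map_inv₀, map_pow, map_natCast, div_eq_inv_mul]
  rw [key, LinearMap.map_smul, smul_eq_mul]
  -- compute trace (S*S)
  have hSS : Algebra.trace ℚ K (S * S) = ∑ j ∈ range ℓ, ∑ k ∈ range ℓ,
      (j:ℚ) * (k:ℚ) * (if ℓ ∣ (j+k) then (ℓ:ℚ) - 1 else -1) := by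
    rw [hSdef, Finset.sum_mul_sum, map_sum]
    refine Finset.sum_congr rfl fun j _ => ?_
    rw [map_sum]
    refine Finset.sum_congr rfl fun k _ => ?_
    have he : (j:K) * ζ^j * ((k:K) * ζ^k) = ((j:ℚ)*(k:ℚ)) • ζ^(j+k) := by
      rw [Algebra.smul_def]
      push_cast
      ring
    rw [he, LinearMap.map_smul, Tpow (j+k), smul_eq_mul]
  rw [hSS]
  -- evaluate the double sum in ℚ
  have split : ∀ j ∈ range ℓ,
      ∑ k ∈ range ℓ, (j:ℚ)*(k:ℚ)*(if ℓ ∣ (j+k) then (ℓ:ℚ)-1 else -1)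
      = -((j:ℚ) * ((ℓ:ℚ)*((ℓ:ℚ)-1)/2)) + (ℓ:ℚ) * ((j:ℚ)*((ℓ:ℚ)-(j:ℚ))) := by
    intro j hj
    rw [Finset.mem_range] at hj
    have term : ∀ k : ℕ, (j:ℚ)*(k:ℚ)*(if ℓ ∣ (j+k) then (ℓ:ℚ)-1 else -1)
        = -((j:ℚ)*(k:ℚ)) + (ℓ:ℚ) * (if ℓ ∣ (j+k) then (j:ℚ)*(k:ℚ) else 0) := by
      intro k
      split_ifs <;> ring
    calc ∑ k ∈ range ℓ, (j:ℚ)*(k:ℚ)*(if ℓ ∣ (j+k) then (ℓ:ℚ)-1 else -1)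
        = ∑ k ∈ range ℓ, (-((j:ℚ)*(k:ℚ))
            + (ℓ:ℚ) * (if ℓ ∣ (j+k) then (j:ℚ)*(k:ℚ) else 0)) := by
          exact Finset.sum_congr rfl fun k _ => term k
      _ = -((j:ℚ) * ∑ k ∈ range ℓ, (k:ℚ))
            + (ℓ:ℚ) * ∑ k ∈ range ℓ, (if ℓ ∣ (j+k) then (j:ℚ)*(k:ℚ) else 0) := by
          rw [Finset.sum_add_distrib, Finset.sum_neg_distrib, ← Finset.mul_sum,
            ← Finset.mul_sum]
      _ = -((j:ℚ) * ((ℓ:ℚ)*((ℓ:ℚ)-1)/2)) + (ℓ:ℚ) * ((j:ℚ)*((ℓ:ℚ)-(j:ℚ))) := by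
          rw [aux_sumId, aux_innerSum ℓ hℓ.pos j hj]
  rw [Finset.sum_congr rfl split, Finset.sum_add_distrib, Finset.sum_neg_distrib,
    ← Finset.mul_sum]
  have e1 : ∑ j ∈ range ℓ, (j:ℚ) * ((ℓ:ℚ)*((ℓ:ℚ)-1)/2)
      = ((ℓ:ℚ)*((ℓ:ℚ)-1)/2) * ((ℓ:ℚ)*((ℓ:ℚ)-1)/2) := by
    rw [← Finset.sum_mul, aux_sumId]
  have e2 : ∑ j ∈ range ℓ, (j:ℚ)*((ℓ:ℚ)-(j:ℚ))
      = (ℓ:ℚ) * ((ℓ:ℚ)*((ℓ:ℚ)-1)/2) - (ℓ:ℚ)*((ℓ:ℚ)-1)*(2*(ℓ:ℚ)-1)/6 := by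
    have : ∀ j ∈ range ℓ, (j:ℚ)*((ℓ:ℚ)-(j:ℚ)) = (ℓ:ℚ)*(j:ℚ) - (j:ℚ)^2 := by
      intro j _; ring
    rw [Finset.sum_congr rfl this, Finset.sum_sub_distrib, ← Finset.mul_sum,
      aux_sumId, aux_sumSq]
  rw [e1, e2]
  field_simp
  ring
end

section
/- For a prime ℓ and an integer a with a not divisible by ℓ, the trace from ℚ(ζ_ℓ) to ℚ of ζ_ℓ^a/(ζ_ℓ - 1) equals (ℓ+1)/2 - [a]_ℓ, where [a]_ℓ ∈ {0, ..., ℓ-1} is the residue of a modulo ℓ. -/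
open Finset in
private lemma aux_sum_mul {R : Type*} [CommRing R] (x : R) (n : ℕ) :
    (x - 1) * ∑ k ∈ Finset.range n, (k : R) * x ^ k
      = ((n : R) - 1) * x ^ n - (∑ k ∈ Finset.range n, x ^ k) + 1 := by
  induction n with
  | zero => simp
  | succ n ih =>
    rw [Finset.sum_range_succ, Finset.sum_range_succ, mul_add, ih]
    push_cast
    ring

/-- For a prime `ℓ` and an integer `a` with `ℓ ∤ a`, the trace from `ℚ(ζ_ℓ)` to `ℚ` of
`ζ_ℓ^a/(ζ_ℓ - 1)` equals `(ℓ+1)/2 - [a]_ℓ`, where `[a]_ℓ = a % ℓ ∈ {0,…,ℓ-1}`. -/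
theorem trace_zeta_pow_div_zeta_sub_one (ℓ : ℕ) (hℓ : ℓ.Prime)
    (K : Type*) [Field K] [Algebra ℚ K]
    [IsCyclotomicExtension {ℓ} ℚ K]
    (ζ : K) (hζ : IsPrimitiveRoot ζ ℓ)
    (a : ℤ) (ha : ¬ (ℓ : ℤ) ∣ a) :
    Algebra.trace ℚ K (ζ ^ a / (ζ - 1)) =
      ((ℓ : ℚ) + 1) / 2 - ((a % (ℓ : ℤ) : ℤ) : ℚ) := by
  classical
  set n : ℕ+ := ⟨ℓ, hℓ.pos⟩ with hn
  haveI : IsCyclotomicExtension {(n : ℕ)} ℚ K := ‹IsCyclotomicExtension {ℓ} ℚ K›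
  have hℓ2 : 1 < ℓ := hℓ.one_lt
  have hirr : Irreducible (Polynomial.cyclotomic (n : ℕ) ℚ) :=
    Polynomial.cyclotomic.irreducible_rat hℓ.pos
  haveI : FiniteDimensional ℚ K := IsCyclotomicExtension.finiteDimensional {(n : ℕ)} ℚ K
  haveI : IsGalois ℚ K := IsCyclotomicExtension.isGalois {(n : ℕ)} ℚ K
  have hinj : Function.Injective (algebraMap ℚ K) := (algebraMap ℚ K).injective
  have hζn : IsPrimitiveRoot ζ (n : ℕ) := hζ
  -- trace is invariant under automorphisms
  have htrconj : ∀ (σ : K ≃ₐ[ℚ] K) (x : K),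
      Algebra.trace ℚ K (σ x) = Algebra.trace ℚ K x := by
    intro σ x
    apply hinj
    rw [trace_eq_sum_automorphisms, trace_eq_sum_automorphisms]
    exact Fintype.sum_equiv (Equiv.mulRight σ) _ _
      (fun τ => (AlgEquiv.mul_apply τ σ x).symm)
  -- automorphisms sending ζ to ζ^k
  have hexists : ∀ k : ℕ, ¬ ℓ ∣ k → ∃ σ : K ≃ₐ[ℚ] K, σ ζ = ζ ^ k := by
    intro k hk
    have hcop : k.Coprime ℓ := (hℓ.coprime_iff_not_dvd.mpr hk).symm
    have hk' : IsPrimitiveRoot (ζ ^ k) (n : ℕ) := hζn.pow_of_coprime k hcop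
    refine ⟨(IsCyclotomicExtension.fromZetaAut hζn hirr).symm.trans
      (IsCyclotomicExtension.fromZetaAut hk' hirr), ?_⟩
    have h1 : (IsCyclotomicExtension.fromZetaAut hζn hirr).symm ζ
        = IsCyclotomicExtension.zeta n ℚ K :=
      (AlgEquiv.symm_apply_eq _).mpr
        (IsCyclotomicExtension.fromZetaAut_spec hζn hirr).symm
    simp only [AlgEquiv.trans_apply, h1]
    exact IsCyclotomicExtension.fromZetaAut_spec hk' hirr
  -- basic facts
  have hsum0 : (∑ k ∈ Finset.range ℓ, ζ ^ k) = 0 := hζ.geom_sum_eq_zero hℓ2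
  have htr1 : Algebra.trace ℚ K 1 = (ℓ : ℚ) - 1 := by
    rw [show (1 : K) = algebraMap ℚ K 1 by simp, Algebra.trace_algebraMap,
      IsCyclotomicExtension.finrank K hirr, show ((n : ℕ)) = ℓ from rfl,
      Nat.totient_prime hℓ]
    simp [Nat.cast_sub hℓ.one_le]
  -- trace of ζ is -1
  obtain ⟨m, hm⟩ : ∃ m, ℓ = m + 1 := ⟨ℓ - 1, (Nat.succ_pred_eq_of_pos hℓ.pos).symm⟩
  have hm0 : m ≠ 0 := by omega
  have hpowζ : ∀ k : ℕ, ¬ ℓ ∣ k →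
      Algebra.trace ℚ K (ζ ^ k) = Algebra.trace ℚ K ζ := by
    intro k hk
    obtain ⟨σ, hσ⟩ := hexists k hk
    rw [← hσ, htrconj]
  have htζ : Algebra.trace ℚ K ζ = -1 := by
    have h0 : (0 : ℚ) = ∑ k ∈ Finset.range ℓ, Algebra.trace ℚ K (ζ ^ k) := by
      rw [← map_sum, hsum0, map_zero]
    rw [hm, Finset.sum_range_succ'] at h0
    have h1 : ∀ i ∈ Finset.range m,
        Algebra.trace ℚ K (ζ ^ (i + 1)) = Algebra.trace ℚ K ζ := by
      intro i hi
      simp only [Finset.mem_range] at hi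
      exact hpowζ (i + 1) (Nat.not_dvd_of_pos_of_lt (by omega) (by omega))
    rw [Finset.sum_congr rfl h1, Finset.sum_const, pow_zero, htr1, nsmul_eq_mul, Finset.card_range] at h0
    have hmQ : (m : ℚ) ≠ 0 := Nat.cast_ne_zero.mpr hm0
    have hℓm : (ℓ : ℚ) = (m : ℚ) + 1 := by rw [hm]; push_cast; ring
    refine mul_left_cancel₀ hmQ ?_
    rw [hℓm] at h0
    linarith
  have htζk : ∀ k : ℕ, ¬ ℓ ∣ k → Algebra.trace ℚ K (ζ ^ k) = -1 := by
    intro k hk; rw [hpowζ k hk, htζ]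
  -- trace of 1/(ζ-1)
  have hζ1 : ζ - 1 ≠ 0 := sub_ne_zero.mpr (hζ.ne_one hℓ2)
  haveI : CharZero K := charZero_of_injective_algebraMap hinj
  have hℓK : (ℓ : K) ≠ 0 := Nat.cast_ne_zero.mpr hℓ.ne_zero
  have hW : (ζ - 1) * (∑ k ∈ Finset.range ℓ, (k : K) * ζ ^ k) = (ℓ : K) := by
    rw [aux_sum_mul, hζ.pow_eq_one, hsum0]; ring
  have hc : (ζ - 1)⁻¹ = (∑ k ∈ Finset.range ℓ, (k : K) * ζ ^ k) / (ℓ : K) :=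
    inv_eq_of_mul_eq_one_right (by rw [mul_div_assoc', hW, div_self hℓK])
  have htc : Algebra.trace ℚ K ((ζ - 1)⁻¹) = -(((ℓ : ℚ) - 1) / 2) := by
    have hsmul : (∑ k ∈ Finset.range ℓ, (k : K) * ζ ^ k) / (ℓ : K)
        = ∑ k ∈ Finset.range ℓ, ((k : ℚ) / (ℓ : ℚ)) • ζ ^ k := by
      rw [Finset.sum_div]
      refine Finset.sum_congr rfl fun k _ => ?_
      rw [Algebra.smul_def, map_div₀, map_natCast, map_natCast]
      ring
    rw [hc, hsmul, map_sum]
    have hterm : ∀ k ∈ Finset.range ℓ,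
        Algebra.trace ℚ K (((k : ℚ) / (ℓ : ℚ)) • ζ ^ k)
          = -((k : ℚ) / (ℓ : ℚ)) := by
      intro k hk
      rw [map_smul, smul_eq_mul]
      rcases Nat.eq_zero_or_pos k with h0 | h0
      · simp [h0]
      · simp only [Finset.mem_range] at hk
        rw [htζk k (Nat.not_dvd_of_pos_of_lt h0 hk)]
        ring
    rw [Finset.sum_congr rfl hterm]
    have hgauss : (∑ k ∈ Finset.range ℓ, (k : ℚ)) = (ℓ : ℚ) * ((ℓ : ℚ) - 1) / 2 := by
      have h2 := congrArg (fun t : ℕ => (t : ℚ)) (Finset.sum_range_id_mul_two ℓ)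
      push_cast [Nat.cast_sub hℓ.one_le] at h2
      linarith
    have hℓQ0 : (ℓ : ℚ) ≠ 0 := Nat.cast_ne_zero.mpr hℓ.ne_zero
    rw [show (∑ k ∈ Finset.range ℓ, -((k : ℚ) / (ℓ : ℚ)))
        = -((∑ k ∈ Finset.range ℓ, (k : ℚ)) / (ℓ : ℚ)) by
      rw [Finset.sum_div, ← Finset.sum_neg_distrib], hgauss]
    field_simp
  -- reduce ζ^a to ζ^r
  set r : ℕ := (a % (ℓ : ℤ)).toNat with hr
  have hamod0 : a % (ℓ : ℤ) ≠ 0 := fun h => ha (Int.dvd_of_emod_eq_zero h)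
  have hamodnn : 0 ≤ a % (ℓ : ℤ) :=
    Int.emod_nonneg a (by exact_mod_cast hℓ.ne_zero)
  have hamodlt : a % (ℓ : ℤ) < ℓ := Int.emod_lt_of_pos a (by exact_mod_cast hℓ.pos)
  have hr0 : 0 < r := by omega
  have hrℓ : r < ℓ := by omega
  have hrcast : ((a % (ℓ : ℤ) : ℤ) : ℚ) = (r : ℚ) := by
    rw [hr]; exact_mod_cast (Int.toNat_of_nonneg hamodnn).symm
  have hζ0 : ζ ≠ 0 := hζ.ne_zero hℓ.ne_zero
  have hzr : ζ ^ a = ζ ^ r := by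
    conv_lhs => rw [← Int.mul_ediv_add_emod a (ℓ : ℤ)]
    rw [zpow_add₀ hζ0, zpow_mul, zpow_natCast, hζ.pow_eq_one, one_zpow, one_mul,
      ← Int.toNat_of_nonneg hamodnn, zpow_natCast]
  -- split the fraction
  have hsplit : ζ ^ r / (ζ - 1) = (∑ k ∈ Finset.range r, ζ ^ k) + (ζ - 1)⁻¹ := by
    field_simp
    linear_combination -geom_sum_mul ζ r
  -- trace of the geometric sum part
  obtain ⟨s, hs⟩ : ∃ s, r = s + 1 := ⟨r - 1, by omega⟩
  have htS : Algebra.trace ℚ K (∑ k ∈ Finset.range r, ζ ^ k)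
      = (ℓ : ℚ) - 1 - (s : ℚ) := by
    rw [map_sum, hs, Finset.sum_range_succ']
    have h1 : ∀ i ∈ Finset.range s,
        Algebra.trace ℚ K (ζ ^ (i + 1)) = -1 := by
      intro i hi
      simp only [Finset.mem_range] at hi
      exact htζk (i + 1) (Nat.not_dvd_of_pos_of_lt (by omega) (by omega))
    rw [Finset.sum_congr rfl h1, Finset.sum_const, pow_zero, htr1]
    simp [nsmul_eq_mul]
    ring
  -- conclude
  rw [hzr, hsplit, map_add, htS, htc, hrcast, hs]
  push_cast
  ring
end

section
/- Let ℓ ≥ 5 be a prime, p ≠ ℓ a prime, ζ_ℓ a primitive ℓ-th root of unity, and let b = [1 - p^{m-1}]_ℓ where m is the order of p mod ℓ, with b ≥ 3. Then the trace from ℚ(ζ_ℓ) to ℚ of (ζ_ℓ^{p+1} + ζ_ℓ^{p-1})/(ζ_ℓ^p - 1)² equals -b² + b(ℓ+2) - (ℓ² + 6ℓ + 5)/6. -/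
open Finset Polynomial


lemma aux_sum_id (n : ℕ) : ∑ i ∈ Finset.range n, (i:ℚ) = n*((n:ℚ)-1)/2 := by
  induction n with
  | zero => simp
  | succ k ih => rw [Finset.sum_range_succ, ih]; push_cast; ring

lemma aux_sum_sq (n : ℕ) : ∑ i ∈ Finset.range n, (i:ℚ)^2 = n*((n:ℚ)-1)*(2*n-1)/6 := by
  induction n with
  | zero => simp
  | succ k ih => rw [Finset.sum_range_succ, ih]; push_cast; ring

lemma trace_prim_root {ℓ : ℕ} (hℓ : ℓ.Prime) {K : Type*} [Field K] [Algebra ℚ K]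
    [IsCyclotomicExtension {ℓ} ℚ K] {x : K} (hx : IsPrimitiveRoot x ℓ) :
    Algebra.trace ℚ K x = -1 := by
  haveI : Fact ℓ.Prime := ⟨hℓ⟩
  haveI : NeZero ((ℓ : ℕ) : ℚ) := ⟨Nat.cast_ne_zero.mpr hℓ.ne_zero⟩
  have hirr : Irreducible (cyclotomic ℓ ℚ) := cyclotomic.irreducible_rat hℓ.pos
  have hx' : IsPrimitiveRoot x ℓ := hx
  have h1 : (hx'.powerBasis ℚ).gen = x := hx'.powerBasis_gen ℚ
  have h2 := (hx'.powerBasis ℚ).trace_gen_eq_nextCoeff_minpoly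
  rw [h1] at h2
  rw [h2, ← hx.minpoly_eq_cyclotomic_of_irreducible hirr]
  have hdeg : (cyclotomic ℓ ℚ).natDegree = ℓ - 1 := by
    rw [natDegree_cyclotomic, Nat.totient_prime hℓ]
  rw [nextCoeff_of_natDegree_pos (by rw [hdeg]; have := hℓ.two_le; omega), hdeg]
  have h5 := hℓ.two_le
  rw [cyclotomic_prime ℚ ℓ, finset_sum_coeff]
  simp only [coeff_X_pow]
  rw [Finset.sum_ite_eq (Finset.range ℓ) (ℓ - 1 - 1) (fun _ => (1:ℚ))]
  simp only [Finset.mem_range]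
  rw [if_pos (by omega)]

lemma trace_pow {ℓ : ℕ} (hℓ : ℓ.Prime) {K : Type*} [Field K] [Algebra ℚ K]
    [IsCyclotomicExtension {ℓ} ℚ K] {x : K} (hx : IsPrimitiveRoot x ℓ) (k : ℕ) :
    Algebra.trace ℚ K (x ^ k) = if ℓ ∣ k then (ℓ:ℚ) - 1 else -1 := by
  by_cases h : ℓ ∣ k
  · rw [if_pos h]
    have h1 : x ^ k = 1 := by
      obtain ⟨c, rfl⟩ := h
      rw [pow_mul, hx.pow_eq_one, one_pow]
    rw [h1]
    have h2 := Algebra.trace_algebraMap (R := ℚ) (S := K) 1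
    rw [map_one] at h2
    rw [h2]
    have hirr : Irreducible (cyclotomic ℓ ℚ) := cyclotomic.irreducible_rat hℓ.pos
    have h3 : Module.finrank ℚ K = ℓ - 1 := by
      haveI : NeZero ℓ := ⟨hℓ.ne_zero⟩
      rw [IsCyclotomicExtension.finrank (n := ℓ) K hirr]
      exact Nat.totient_prime hℓ
    rw [h3, nsmul_eq_mul, mul_one, Nat.cast_sub hℓ.one_lt.le, Nat.cast_one]
  · rw [if_neg h]
    have hcop : Nat.Coprime k ℓ := ((Nat.Prime.coprime_iff_not_dvd hℓ).mpr h).symm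
    exact trace_prim_root hℓ (hx.pow_of_coprime k hcop)



/-- Let `ℓ ≥ 5` be a prime, `p ≠ ℓ` a prime, `ζ` a primitive `ℓ`-th root of unity and
`b = [1 - p^(m-1)]_ℓ` where `m` is the order of `p` mod `ℓ`, with `b ≥ 3`.  Then the
trace from `ℚ(ζ)` to `ℚ` of `(ζ^(p+1) + ζ^(p-1))/(ζ^p - 1)²` equals
`-b² + b(ℓ+2) - (ℓ² + 6ℓ + 5)/6`. -/
theorem trace_S_eq (ℓ : ℕ) (hℓ : ℓ.Prime) (hℓ5 : 5 ≤ ℓ)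
    (p : ℕ) (hp : p.Prime) (hpℓ : p ≠ ℓ)
    (K : Type*) [Field K] [Algebra ℚ K]
    [IsCyclotomicExtension {ℓ} ℚ K]
    (ζ : K) (hζ : IsPrimitiveRoot ζ ℓ)
    (m : ℕ) (hm : m = orderOf (p : ZMod ℓ))
    (b : ℤ) (hb : b = (1 - (p : ℤ) ^ (m - 1)) % (ℓ : ℤ)) (hb3 : 3 ≤ b) :
    Algebra.trace ℚ K ((ζ ^ (p + 1) + ζ ^ (p - 1)) / (ζ ^ p - 1) ^ 2) =
      -(b : ℚ) ^ 2 + (b : ℚ) * ((ℓ : ℚ) + 2) - ((ℓ : ℚ) ^ 2 + 6 * (ℓ : ℚ) + 5) / 6 := by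
  haveI : Fact ℓ.Prime := ⟨hℓ⟩
  haveI : NeZero ℓ := ⟨hℓ.ne_zero⟩
  have hcop : Nat.Coprime p ℓ := (Nat.coprime_primes hp hℓ).mpr hpℓ
  set η : K := ζ ^ p with hηdef
  have hη : IsPrimitiveRoot η ℓ := hζ.pow_of_coprime p hcop
  have hη1 : η ≠ 1 := hη.ne_one (by omega)
  have hd : ζ ^ p - 1 ≠ 0 := sub_ne_zero.mpr hη1
  -- bounds on b and a
  have hb0 : 0 ≤ b := hb ▸ Int.emod_nonneg _ (by exact_mod_cast hℓ.ne_zero)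
  have hbl : b < (ℓ : ℤ) := hb ▸ Int.emod_lt_of_pos _ (by exact_mod_cast hℓ.pos)
  set a : ℕ := b.toNat with hadef
  have haz : (a : ℤ) = b := Int.toNat_of_nonneg hb0
  have ha3 : 3 ≤ a := by omega
  have hal : a < ℓ := by omega
  -- the order m is positive
  have hpne : (p : ZMod ℓ) ≠ 0 := by
    rw [Ne, ZMod.natCast_eq_zero_iff]
    exact (Nat.Prime.coprime_iff_not_dvd hℓ).mp hcop.symm
  have hmpos : 1 ≤ m := by
    have h1 : (p : ZMod ℓ) ^ (ℓ - 1) = 1 := ZMod.pow_card_sub_one_eq_one hpne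
    have h2 := orderOf_dvd_of_pow_eq_one h1
    rw [← hm] at h2
    rcases Nat.eq_zero_or_pos m with h | h
    · rw [h] at h2; have := Nat.eq_zero_of_zero_dvd h2; omega
    · omega
  have hPm : (p : ZMod ℓ) ^ m = 1 := by rw [hm]; exact pow_orderOf_eq_one _
  have hPsucc : (p : ZMod ℓ) * (p : ZMod ℓ) ^ (m - 1) = 1 := by
    rw [← pow_succ']
    rw [show m - 1 + 1 = m by omega]
    exact hPm
  -- a in ZMod ℓ
  have hcast_a : ((a : ℕ) : ZMod ℓ) = 1 - (p : ZMod ℓ) ^ (m - 1) := by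
    have : ((a : ℕ) : ZMod ℓ) = ((b : ℤ) : ZMod ℓ) := by
      rw [← haz]; push_cast; ring
    rw [this, hb, ZMod.intCast_mod]
    push_cast; ring
  -- key congruences
  have hPa : ((p * a : ℕ) : ZMod ℓ) = ((p - 1 : ℕ) : ZMod ℓ) := by
    rw [Nat.cast_mul, hcast_a, Nat.cast_sub hp.one_le, Nat.cast_one]
    rw [mul_sub, mul_one, hPsucc]
  have hPa' : ((p * (ℓ + 2 - a) : ℕ) : ZMod ℓ) = ((p + 1 : ℕ) : ZMod ℓ) := by
    rw [Nat.cast_mul, Nat.cast_sub (by omega : a ≤ ℓ + 2), Nat.cast_add, ZMod.natCast_self,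
      hcast_a, Nat.cast_add, Nat.cast_one]
    push_cast
    linear_combination hPsucc
  -- power identities
  have hperiod : ∀ x : ℕ, ζ ^ x = ζ ^ (x % ℓ) := by
    intro x
    conv_lhs => rw [← Nat.mod_add_div x ℓ]
    rw [pow_add, pow_mul, hζ.pow_eq_one, one_pow, mul_one]
  have hmodeq : ∀ x y : ℕ, ((x : ℕ) : ZMod ℓ) = ((y : ℕ) : ZMod ℓ) → ζ ^ x = ζ ^ y := by
    intro x y hxy
    rw [hperiod x, hperiod y, (ZMod.natCast_eq_natCast_iff x y ℓ).mp hxy]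
  have hpow1 : ζ ^ (p - 1) = η ^ a := by
    rw [hηdef, ← pow_mul]
    exact (hmodeq _ _ hPa).symm
  have hpow2 : ζ ^ (p + 1) = η ^ (ℓ + 2 - a) := by
    rw [hηdef, ← pow_mul]
    exact (hmodeq _ _ hPa').symm
  -- characteristic zero facts
  haveI : CharZero K := charZero_of_injective_algebraMap (algebraMap ℚ K).injective
  have hlK : (ℓ : K) ≠ 0 := Nat.cast_ne_zero.mpr hℓ.ne_zero
  -- the auxiliary elements
  set T : K := ∑ i ∈ Finset.range ℓ, (i : K) * η ^ i with hTdef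
  set V : K := ∑ i ∈ Finset.range ℓ, (-((i : K) * ((i : K) + 1)) / 2) * η ^ i with hVdef
  have hS : ∑ i ∈ Finset.range ℓ, η ^ i = 0 := hη.geom_sum_eq_zero (by omega)
  have hT : (η - 1) * T = (ℓ : K) := by
    have e1 : (η - 1) * T =
        ∑ i ∈ Finset.range ℓ,
          ((((i+1 : ℕ) : K) * η ^ (i+1) - (i : K) * η ^ i) - η ^ (i+1)) := by
      rw [hTdef, Finset.mul_sum]
      refine Finset.sum_congr rfl fun i _ => ?_
      push_cast
      ring
    rw [e1, Finset.sum_sub_distrib]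
    rw [Finset.sum_range_sub (fun i => (i : K) * η ^ i) ℓ]
    have e2 : ∑ i ∈ Finset.range ℓ, η ^ (i+1) = 0 := by
      simp only [pow_succ]
      rw [← Finset.sum_mul, hS, zero_mul]
    rw [e2, hη.pow_eq_one]
    simp
  have hV : (η - 1) * V = T - (ℓ : K) * ((ℓ : K) - 1) / 2 := by
    have e1 : (η - 1) * V =
        ∑ i ∈ Finset.range ℓ,
          (((-((((i+1 : ℕ) : K)) * ((((i+1 : ℕ) : K)) + 1)) / 2) * η ^ (i+1)
            - (-((i : K) * ((i : K) + 1)) / 2) * η ^ i) + ((i : K) + 1) * η ^ (i+1)) := by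
      rw [hVdef, Finset.mul_sum]
      refine Finset.sum_congr rfl fun i _ => ?_
      push_cast
      ring
    rw [e1, Finset.sum_add_distrib]
    rw [Finset.sum_range_sub (fun i => (-((i : K) * ((i : K) + 1)) / 2) * η ^ i) ℓ]
    have e2 : ∑ i ∈ Finset.range ℓ, ((i : K) + 1) * η ^ (i+1) = T + (ℓ : K) := by
      have e3 : ∀ i : ℕ, ((i : K) + 1) * η ^ (i+1) = (((i+1:ℕ) : K)) * η ^ (i+1) := by
        intro i; push_cast; ring
      rw [Finset.sum_congr rfl fun i _ => e3 i]
      have e4 := Finset.sum_range_succ' (fun i => (i : K) * η ^ i) ℓ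
      rw [Finset.sum_range_succ (fun i => (i : K) * η ^ i) ℓ] at e4
      rw [← hTdef] at e4
      simp only [Nat.cast_zero, zero_mul, add_zero, pow_zero] at e4
      rw [← e4, hη.pow_eq_one, mul_one]
    rw [e2, hη.pow_eq_one]
    push_cast
    ring
  set W : K := 2 * V + ((ℓ : K) - 1) * T with hWdef
  have hW : (η - 1) ^ 2 * W = 2 * (ℓ : K) := by
    rw [hWdef]
    linear_combination (2*(η-1)) * hV + ((ℓ:K)-1)*(η-1) * hT + 2 * hT
  have hlQ : (ℓ : ℚ) ≠ 0 := Nat.cast_ne_zero.mpr hℓ.ne_zero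
  have h2l : (2 * (ℓ : K)) ≠ 0 := mul_ne_zero two_ne_zero hlK
  have hE : (ζ ^ (p + 1) + ζ ^ (p - 1)) / (η - 1) ^ 2
      = (η ^ (ℓ + 2 - a) + η ^ a) * W / (2 * (ℓ : K)) := by
    rw [hpow1, hpow2, div_eq_div_iff (pow_ne_zero 2 (sub_ne_zero.mpr hη1)) h2l]
    linear_combination (-(η ^ (ℓ + 2 - a) + η ^ a)) * hW
  have hsum : (η ^ (ℓ + 2 - a) + η ^ a) * W / (2 * (ℓ : K))
      = ∑ i ∈ Finset.range ℓ, ((i:ℚ)*((ℓ:ℚ)-2-(i:ℚ))/(2*(ℓ:ℚ))) •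
          (η ^ (ℓ + 2 - a + i) + η ^ (a + i)) := by
    rw [hWdef, hVdef, hTdef, Finset.mul_sum, Finset.mul_sum, ← Finset.sum_add_distrib,
      Finset.mul_sum, Finset.sum_div]
    refine Finset.sum_congr rfl fun i hi => ?_
    rw [Algebra.smul_def, eq_ratCast]
    push_cast
    rw [pow_add, pow_add]
    field_simp
    ring
  -- the sum of the weights
  have hqsum : ∑ i ∈ Finset.range ℓ, ((i:ℚ)*((ℓ:ℚ)-2-(i:ℚ))/(2*(ℓ:ℚ)))
      = ((ℓ:ℚ)-1)*((ℓ:ℚ)-5)/12 := by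
    have e : ∀ i ∈ Finset.range ℓ, ((i:ℚ)*((ℓ:ℚ)-2-(i:ℚ))/(2*(ℓ:ℚ)))
        = (((ℓ:ℚ)-2) * (i:ℚ) - (i:ℚ)^2) * (1/(2*(ℓ:ℚ))) := by
      intro i _; ring
    rw [Finset.sum_congr rfl e, ← Finset.sum_mul, Finset.sum_sub_distrib, ← Finset.mul_sum,
      aux_sum_id, aux_sum_sq]
    field_simp
    ring
  -- evaluation of the indicator sums
  have key : ∀ c : ℕ, 3 ≤ c → c ≤ ℓ - 1 →
      (∑ i ∈ Finset.range ℓ, ((i:ℚ)*((ℓ:ℚ)-2-(i:ℚ))/(2*(ℓ:ℚ))) *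
        (if ℓ ∣ (c + i) then (ℓ:ℚ) - 1 else -1))
      = -(((ℓ:ℚ)-1)*((ℓ:ℚ)-5)/12)
        + (ℓ:ℚ) * (((ℓ-c : ℕ):ℚ)*((ℓ:ℚ)-2-((ℓ-c : ℕ):ℚ))/(2*(ℓ:ℚ))) := by
    intro c hc3 hcl
    have step : ∀ i ∈ Finset.range ℓ, ((i:ℚ)*((ℓ:ℚ)-2-(i:ℚ))/(2*(ℓ:ℚ))) *
        (if ℓ ∣ (c + i) then (ℓ:ℚ) - 1 else -1)
        = -((i:ℚ)*((ℓ:ℚ)-2-(i:ℚ))/(2*(ℓ:ℚ)))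
          + (if i = ℓ - c then (ℓ:ℚ) * ((i:ℚ)*((ℓ:ℚ)-2-(i:ℚ))/(2*(ℓ:ℚ))) else 0) := by
      intro i hi
      rw [Finset.mem_range] at hi
      by_cases h : i = ℓ - c
      · rw [if_pos (show ℓ ∣ c + i by rw [h, Nat.add_sub_cancel' (by omega : c ≤ ℓ)]), if_pos h]
        ring
      · have hnd : ¬ ℓ ∣ (c + i) := by
          rintro ⟨k, hk⟩
          match k, hk with
          | 0, hk => omega
          | 1, hk => omega
          | (k+2), hk =>
            have h2 : ℓ * 2 ≤ ℓ * (k + 2) := Nat.mul_le_mul_left ℓ (by omega)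
            omega
        rw [if_neg hnd, if_neg h]
        ring
    rw [Finset.sum_congr rfl step, Finset.sum_add_distrib]
    rw [Finset.sum_ite_eq' (Finset.range ℓ) (ℓ - c)
      (fun i => (ℓ:ℚ) * ((i:ℚ)*((ℓ:ℚ)-2-(i:ℚ))/(2*(ℓ:ℚ))))]
    rw [if_pos (Finset.mem_range.mpr (by omega))]
    rw [Finset.sum_neg_distrib, hqsum]
  -- putting it together
  rw [hE, hsum, map_sum]
  simp only [map_smul, map_add, smul_eq_mul, trace_pow hℓ hη]
  have split : ∀ i ∈ Finset.range ℓ, ((i:ℚ)*((ℓ:ℚ)-2-(i:ℚ))/(2*(ℓ:ℚ))) *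
      ((if ℓ ∣ (ℓ + 2 - a + i) then (ℓ:ℚ) - 1 else -1) + (if ℓ ∣ (a + i) then (ℓ:ℚ) - 1 else -1))
      = ((i:ℚ)*((ℓ:ℚ)-2-(i:ℚ))/(2*(ℓ:ℚ))) * (if ℓ ∣ (ℓ + 2 - a + i) then (ℓ:ℚ) - 1 else -1)
        + ((i:ℚ)*((ℓ:ℚ)-2-(i:ℚ))/(2*(ℓ:ℚ))) * (if ℓ ∣ (a + i) then (ℓ:ℚ) - 1 else -1) := by
    intro i _; ring
  rw [Finset.sum_congr rfl split, Finset.sum_add_distrib,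
    key (ℓ + 2 - a) (by omega) (by omega), key a (by omega) (by omega)]
  rw [show ℓ - (ℓ + 2 - a) = a - 2 by omega]
  have hc1 : ((a - 2 : ℕ) : ℚ) = (a : ℚ) - 2 := by
    push_cast [Nat.cast_sub (show 2 ≤ a by omega)]; ring
  have hc2 : ((ℓ - a : ℕ) : ℚ) = (ℓ : ℚ) - (a : ℚ) := by
    push_cast [Nat.cast_sub (show a ≤ ℓ by omega)]; ring
  have hc3 : ((a : ℕ) : ℚ) = (b : ℚ) := by exact_mod_cast haz
  rw [hc1, hc2, hc3]
  field_simp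
  ring
end

section
/- Let d ≥ 2 and let ζ be any root of unity whose order is coprime to d (or more generally ζ^ℓ ≠ 1 for all divisors ℓ of d). Then ∑_{ρ: o(ρ)=d} ζ/(ζ - ρ) = ∑_{ℓ | d} ℓ·μ(d/ℓ)·ζ^ℓ/(ζ^ℓ - 1), where the left sum is over primitive d-th roots of unity ρ. -/
open Polynomial Finset

/-- Logarithmic-derivative identity for `X^n - 1`: the sum of `ζ/(ζ - ρ)` over all
`n`-th roots of unity equals `n ζ^n/(ζ^n - 1)`. -/
lemma sum_over_all_roots (K : Type*) [Field K] {n : ℕ} (hn : 0 < n)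
    {ξ : K} (hξ : IsPrimitiveRoot ξ n) {ζ : K} (hζ : ζ ^ n ≠ 1) :
    ∑ ρ ∈ Polynomial.nthRootsFinset n (1 : K), ζ / (ζ - ρ) =
      (n : K) * ζ ^ n / (ζ ^ n - 1) := by
  classical
  have hne : ζ ^ n - 1 ≠ 0 := sub_ne_zero.mpr hζ
  have hprod : ∏ σ ∈ nthRootsFinset n (1 : K), (ζ - σ) = ζ ^ n - 1 := by
    have := congr_arg (eval ζ) (X_pow_sub_one_eq_prod hn hξ)
    simpa [eval_prod] using this.symm
  have hterm : ∀ ρ ∈ nthRootsFinset n (1 : K), ζ - ρ ≠ 0 := by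
    intro ρ hρ h
    apply hne
    rw [← hprod]
    exact Finset.prod_eq_zero hρ h
  -- derivative identity
  have hder : ∑ ρ ∈ nthRootsFinset n (1 : K), ∏ σ ∈ (nthRootsFinset n (1 : K)).erase ρ, (ζ - σ)
      = (n : K) * ζ ^ (n - 1) := by
    have h1 := congr_arg (fun p => eval ζ (derivative p)) (X_pow_sub_one_eq_prod hn hξ)
    simp only [derivative_sub, derivative_one, derivative_X_pow, sub_zero, eval_mul,
      eval_pow, eval_X, eval_natCast, eval_C] at h1
    rw [Finset.prod_eq_multiset_prod, derivative_prod] at h1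
    simp only [derivative_sub, derivative_X, derivative_C, sub_zero, mul_one] at h1
    rw [← coe_evalRingHom, map_multiset_sum, Multiset.map_map] at h1
    rw [h1]
    show Multiset.sum _ = Multiset.sum _
    congr 1
    apply Multiset.map_congr rfl
    intro ρ _
    simp only [Function.comp_apply, coe_evalRingHom]
    rw [show ∏ σ ∈ (nthRootsFinset n (1 : K)).erase ρ, (ζ - σ)
        = (Multiset.map (fun σ => ζ - σ) ((nthRootsFinset n (1 : K)).erase ρ).val).prod from rfl,
      Finset.erase_val]
    rw [← coe_evalRingHom, map_multiset_prod, Multiset.map_map]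
    congr 1
    apply Multiset.map_congr rfl
    intro σ _
    simp
  have key : ∀ ρ ∈ nthRootsFinset n (1 : K),
      ζ / (ζ - ρ) = (ζ * ∏ σ ∈ (nthRootsFinset n (1 : K)).erase ρ, (ζ - σ)) / (ζ ^ n - 1) := by
    intro ρ hρ
    have he : (ζ - ρ) * ∏ σ ∈ (nthRootsFinset n (1 : K)).erase ρ, (ζ - σ) = ζ ^ n - 1 := by
      rw [Finset.mul_prod_erase _ _ hρ, hprod]
    have hprodne : ∏ σ ∈ (nthRootsFinset n (1 : K)).erase ρ, (ζ - σ) ≠ 0 := by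
      intro h
      apply hne; rw [← he, h, mul_zero]
    rw [← he]
    exact (mul_div_mul_right ζ (ζ - ρ) hprodne).symm
  rw [Finset.sum_congr rfl key, ← Finset.sum_div, ← Finset.mul_sum, hder]
  congr 1
  rw [← mul_assoc, mul_comm ζ ((n : K)), mul_assoc]
  congr 1
  rw [← pow_succ']
  congr 1
  omega

/-- Let `d ≥ 2` and let `ζ` be an element of a field `K` of characteristic zero
containing a primitive `d`-th root of unity, with `ζ^ℓ ≠ 1` for every divisor `ℓ` of `d`.
Then `∑_{ρ : o(ρ) = d} ζ/(ζ - ρ) = ∑_{ℓ ∣ d} ℓ·μ(d/ℓ)·ζ^ℓ/(ζ^ℓ - 1)`, where the left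
sum is over the primitive `d`-th roots of unity in `K`. -/
theorem sum_over_primitive_roots (K : Type*) [Field K] [CharZero K]
    (d : ℕ) (hd : 2 ≤ d) (hroots : ∃ ξ : K, IsPrimitiveRoot ξ d)
    (ζ : K) (hζ : ∀ ℓ ∈ d.divisors, ζ ^ ℓ ≠ 1) :
    ∑ ρ ∈ primitiveRoots d K, ζ / (ζ - ρ) =
      ∑ ℓ ∈ d.divisors,
        (ℓ : K) * ((ArithmeticFunction.moebius (d / ℓ) : ℤ) : K) *
          (ζ ^ ℓ / (ζ ^ ℓ - 1)) := by
  classical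
  obtain ⟨ξ, hξ⟩ := hroots
  have hd0 : 0 < d := by omega
  have H : ∀ n > 0, n ∈ {m : ℕ | m ∣ d} →
      (∑ i ∈ n.divisors, ∑ ρ ∈ primitiveRoots i K, ζ / (ζ - ρ))
        = (n : K) * ζ ^ n / (ζ ^ n - 1) := by
    intro n hn hnd
    simp only [Set.mem_setOf_eq] at hnd
    obtain ⟨k, hk⟩ := hnd
    have hξn : IsPrimitiveRoot (ξ ^ k) n := hξ.pow hd0 (by rw [hk, mul_comm])
    have hζn : ζ ^ n ≠ 1 := hζ n (Nat.mem_divisors.mpr ⟨⟨k, hk⟩, hd0.ne'⟩)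
    have : NeZero n := ⟨hn.ne'⟩
    rw [← sum_over_all_roots K hn hξn hζn, IsPrimitiveRoot.nthRoots_one_eq_biUnion_primitiveRoots (R := K) (n := n),
      Finset.sum_biUnion]
    intro i _ j _ hij
    exact IsPrimitiveRoot.disjoint hij
  have key := (ArithmeticFunction.sum_eq_iff_sum_mul_moebius_eq_on {m : ℕ | m ∣ d}
    (fun m n hmn hn => dvd_trans hmn hn)
    (f := fun ℓ => ∑ ρ ∈ primitiveRoots ℓ K, ζ / (ζ - ρ))
    (g := fun n => (n : K) * ζ ^ n / (ζ ^ n - 1))).mp H d hd0 (dvd_refl d)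
  rw [Nat.sum_divisorsAntidiagonal' (f := fun x y =>
    ((ArithmeticFunction.moebius x : ℤ) : K) * ((y : K) * ζ ^ y / (ζ ^ y - 1)))] at key
  rw [← key]
  exact Finset.sum_congr rfl fun ℓ _ => by ring
end

section
/- Let p be an odd prime and for α ∈ μ_{p-1}, n ≥ 0, define u_n(α) = ∑_{1 ≤ k ≤ p^{n+1}-1, p ∤ k} α^k σ_n(k) in the group ring ℤ_p[Gal(ℚ_p(ζ_{p^{n+1}})/ℚ_p)], where σ_n(k) is the automorphism sending ζ_{p^{n+1}} to ζ_{p^{n+1}}^k. Then under the restriction map from level n+1 to level n, Res_{n+1,n}(u_{n+1}(α)) = u_n(α). -/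
/-- Let `p` be an odd prime and `α ∈ μ_{p-1} ⊂ ℤ_p`, `α ≠ 1`.  Identifying
`Gal(ℚ_p(ζ_{p^{m}})/ℚ_p)` with `(ℤ/p^{m})ˣ` (with `σ(k)` corresponding to the class of
`k`), the element `u_n(α) = ∑_{1 ≤ k ≤ p^{n+1}-1, p ∤ k} α^k σ_n(k)` of the group ring
`ℤ_p[(ℤ/p^{n+1})ˣ]` is written as `∑_{g} α^{val g}·g`.  The restriction map from level
`n+1` to level `n` (induced on group rings by `(ℤ/p^{n+2})ˣ → (ℤ/p^{n+1})ˣ`) satisfies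
`Res_{n+1,n}(u_{n+1}(α)) = u_n(α)`. -/
theorem res_u_eq (p : ℕ) [Fact p.Prime] (hodd : Odd p)
    (α : ℤ_[p]) (hα : α ^ (p - 1) = 1) (hα1 : α ≠ 1) (n : ℕ) :
    MonoidAlgebra.mapDomain
        (fun g => Units.map
          (ZMod.castHom (pow_dvd_pow p (by omega : n + 1 ≤ n + 2))
            (ZMod (p ^ (n + 1)))).toMonoidHom g)
        (∑ g : (ZMod (p ^ (n + 2)))ˣ,
          MonoidAlgebra.single g (α ^ ((g : ZMod (p ^ (n + 2))).val))
          : MonoidAlgebra ℤ_[p] (ZMod (p ^ (n + 2)))ˣ) =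
      (∑ g : (ZMod (p ^ (n + 1)))ˣ,
        MonoidAlgebra.single g (α ^ ((g : ZMod (p ^ (n + 1))).val))
        : MonoidAlgebra ℤ_[p] (ZMod (p ^ (n + 1)))ˣ) := by
  classical
  apply MonoidAlgebra.coeff_injective
  simp only [MonoidAlgebra.coeff_sum, MonoidAlgebra.coeff_mapDomain, MonoidAlgebra.coeff_single]
  have hp : p.Prime := Fact.out
  haveI : NeZero (p ^ (n + 1)) := ⟨pow_ne_zero _ hp.ne_zero⟩
  haveI : NeZero (p ^ (n + 2)) := ⟨pow_ne_zero _ hp.ne_zero⟩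
  have hp2 : 2 ≤ p := hp.two_le
  set q : ℕ := p ^ (n + 1) with hq
  set f : (ZMod (p ^ (n + 2)))ˣ → (ZMod (p ^ (n + 1)))ˣ :=
    fun g => Units.map
      (ZMod.castHom (pow_dvd_pow p (by omega : n + 1 ≤ n + 2))
        (ZMod (p ^ (n + 1)))).toMonoidHom g with hf
  -- basic power facts
  have hap : α ^ p = α := by
    calc α ^ p = α ^ (p - 1 + 1) := by rw [Nat.sub_add_cancel (by omega)]
    _ = α := by rw [pow_succ, hα, one_mul]
  have hpow : ∀ m : ℕ, α ^ (p ^ (m + 1)) = α := by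
    intro m
    induction m with
    | zero => simpa using hap
    | succ m ih => rw [pow_succ, pow_mul, ih, hap]
  have hpm : α ^ q = α := hpow n
  have hsum1 : ∑ ℓ : Fin p, α ^ (ℓ : ℕ) = 1 := by
    rw [Fin.sum_univ_eq_sum_range]
    have h := geom_sum_mul α p
    rw [hap] at h
    exact mul_right_cancel₀ (sub_ne_zero.mpr hα1) (h.trans (one_mul (α - 1)).symm)
  -- push mapDomain through the sum
  rw [Finsupp.mapDomain_finset_sum]
  simp only [Finsupp.mapDomain_single]
  -- group by fibers
  rw [← Finset.sum_fiberwise_of_maps_to (g := f) (fun h _ => Finset.mem_univ (f h))]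
  refine Finset.sum_congr rfl (fun g _ => ?_)
  have key : ∀ h ∈ Finset.univ.filter (fun h => f h = g),
      Finsupp.single (f h) (α ^ ((h : ZMod (p ^ (n + 2))).val))
        = Finsupp.single g (α ^ ((h : ZMod (p ^ (n + 2))).val)) := by
    intro h hh
    rw [(Finset.mem_filter.mp hh).2]
  rw [Finset.sum_congr rfl key, ← Finsupp.single_finset_sum]
  congr 1
  -- the fiber sum
  have hmod : ∀ h : (ZMod (p ^ (n + 2)))ˣ, f h = g →
      (h : ZMod (p ^ (n + 2))).val % q = (g : ZMod (p ^ (n + 1))).val := by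
    intro h hh
    have := congrArg (fun u : (ZMod (p ^ (n + 1)))ˣ => ((u : ZMod (p ^ (n + 1))).val)) hh
    simpa [hf, ZMod.castHom_apply, ← ZMod.natCast_val, ZMod.val_natCast] using this
  have hgval : (g : ZMod (p ^ (n + 1))).val < q := ZMod.val_lt _
  have hcop : ∀ ℓ : Fin p,
      Nat.Coprime ((g : ZMod (p ^ (n + 1))).val + q * ℓ) (p ^ (n + 2)) := by
    intro ℓ
    have h1 : Nat.Coprime (g : ZMod (p ^ (n + 1))).val (p ^ (n + 1)) :=
      ZMod.val_coe_unit_coprime g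
    have h2 : ¬ p ∣ (g : ZMod (p ^ (n + 1))).val :=
      (hp.coprime_iff_not_dvd).mp
        ((Nat.Coprime.coprime_dvd_left (dvd_pow_self p (Nat.succ_ne_zero n)) h1.symm).symm).symm
    have h3 : ¬ p ∣ ((g : ZMod (p ^ (n + 1))).val + q * ℓ) := by
      intro h
      exact h2 ((Nat.dvd_add_right (Dvd.dvd.mul_right
        (dvd_pow_self p (Nat.succ_ne_zero n)) _)).mp (by rwa [Nat.add_comm] at h))
    exact Nat.Coprime.pow_right _ ((hp.coprime_iff_not_dvd).mpr h3).symm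
  have hlt : ∀ ℓ : Fin p, (g : ZMod (p ^ (n + 1))).val + q * ℓ < p ^ (n + 2) := by
    intro ℓ
    have h1 : q * (ℓ : ℕ) + q ≤ q * p := by
      have h2 := ℓ.isLt
      calc q * (ℓ : ℕ) + q = q * ((ℓ : ℕ) + 1) := by ring
      _ ≤ q * p := Nat.mul_le_mul_left _ (by omega)
    have h3 : p ^ (n + 2) = q * p := by rw [hq, pow_succ]
    omega
  have hjval : ∀ ℓ : Fin p,
      ((ZMod.unitOfCoprime _ (hcop ℓ) : (ZMod (p ^ (n + 2)))ˣ) :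
        ZMod (p ^ (n + 2))).val = (g : ZMod (p ^ (n + 1))).val + q * ℓ := by
    intro ℓ
    rw [ZMod.coe_unitOfCoprime, ZMod.val_natCast, Nat.mod_eq_of_lt (hlt ℓ)]
  have hbij : (∑ b ∈ Finset.filter (fun h => f h = g) Finset.univ,
      α ^ ((b : ZMod (p ^ (n + 2))).val))
      = ∑ ℓ : Fin p, α ^ ((g : ZMod (p ^ (n + 1))).val + q * (ℓ : ℕ)) := by
    refine Finset.sum_bij'
      (i := fun h _ => (⟨(h : ZMod (p ^ (n + 2))).val / q, ?_⟩ : Fin p))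
      (j := fun ℓ _ => ZMod.unitOfCoprime _ (hcop ℓ)) ?_ ?_ ?_ ?_ ?_
    · have hb := ZMod.val_lt (h : ZMod (p ^ (n + 2)))
      have hq0 : 0 < q := Nat.pow_pos hp.pos
      apply Nat.div_lt_of_lt_mul
      calc (h : ZMod (p ^ (n + 2))).val < p ^ (n + 2) := hb
      _ = q * p := by rw [hq, pow_succ]
    · intro h hh
      exact Finset.mem_univ _
    · intro ℓ _
      refine Finset.mem_filter.mpr ⟨Finset.mem_univ _, ?_⟩
      apply Units.ext
      show ((ZMod.castHom _ (ZMod (p ^ (n + 1)))) _ : ZMod (p ^ (n + 1))) = _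
      rw [ZMod.coe_unitOfCoprime, map_natCast]
      push_cast
      simp [hq, ZMod.natCast_val, ZMod.cast_id]
    · intro h hh
      apply Units.ext
      have hm := hmod h (Finset.mem_filter.mp hh).2
      show ((ZMod.unitOfCoprime _ (hcop _) : (ZMod (p ^ (n + 2)))ˣ) :
        ZMod (p ^ (n + 2))) = (h : ZMod (p ^ (n + 2)))
      rw [ZMod.coe_unitOfCoprime]
      have heq : (g : ZMod (p ^ (n + 1))).val + q * ((h : ZMod (p ^ (n + 2))).val / q)
          = (h : ZMod (p ^ (n + 2))).val := by
        rw [← hm]; exact Nat.mod_add_div _ _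
      rw [heq, ZMod.natCast_val, ZMod.cast_id]
    · intro ℓ _
      apply Fin.ext
      show ((ZMod.unitOfCoprime _ (hcop ℓ) : (ZMod (p ^ (n + 2)))ˣ) :
        ZMod (p ^ (n + 2))).val / q = (ℓ : ℕ)
      rw [hjval ℓ]
      have hq0 : 0 < q := Nat.pow_pos hp.pos
      rw [Nat.add_mul_div_left _ _ hq0, Nat.div_eq_of_lt hgval, Nat.zero_add]
    · intro h hh
      have hm := hmod h (Finset.mem_filter.mp hh).2
      congr 1
      show (h : ZMod (p ^ (n + 2))).val
        = (g : ZMod (p ^ (n + 1))).val + q * ((h : ZMod (p ^ (n + 2))).val / q)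
      rw [← hm]; exact (Nat.mod_add_div _ _).symm
  rw [hbij]
  -- evaluate the geometric sum
  simp only [pow_add, pow_mul, hpm]
  rw [← Finset.mul_sum, hsum1, mul_one]
end
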